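/- Let N be a positive integer, let σ be a uniformly distributed random permutation of {1,…,N}, and let Y_k = #{ i ≤ k : σ(i) ≤ σ(k) } be the relative ranks. Then for every integer i with 2 ≤ i ≤ N, the probability that Y_s > 2 for every s with i < s ≤ N equals i(i−1)/(N(N−1)). -/

import Mathlib

open MeasureTheory ProbabilityTheory
open scoped ENNReal

noncomputable section

instance permMeasurableSpace (N : ℕ) : MeasurableSpace (Equiv.Perm (Fin N)) := ⊤

/-- The uniform probability measure on the set of all permutations of `{1,…,N}`. -/
noncomputable def uniformPerm (N : ℕ) : Measure (Equiv.Perm (Fin N)) :=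
  (PMF.uniformOfFintype (Equiv.Perm (Fin N))).toMeasure

/-- The relative rank `Y_k = #{ i : 1 ≤ i ≤ k ∧ σ(i) ≤ σ(k) }` of the `k`-th item
(1-indexed: the paper's item `i ∈ {1,…,N}` is the element `⟨i-1, _⟩ : Fin N`). -/
def relRank (N : ℕ) (σ : Equiv.Perm (Fin N)) (k : ℕ) : ℕ :=
  if h : 1 ≤ k ∧ k ≤ N then
    (Finset.univ.filter fun i : Fin N => (i : ℕ) + 1 ≤ k ∧ σ i ≤ σ ⟨k - 1, by omega⟩).card
  else 0

/-- A permutation sending a pair of distinct points to a pair of distinct points. -/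
theorem Equiv.Perm.inv_apply_self {α : Type*} (f : Equiv.Perm α) (x : α) : f⁻¹ (f x) = x :=
  f.symm_apply_apply x

theorem Equiv.Perm.apply_inv_self {α : Type*} (f : Equiv.Perm α) (x : α) : f (f⁻¹ x) = x :=
  f.apply_symm_apply x

lemma exists_perm_pair {N : ℕ} (a b x y : Fin N) (hab : a ≠ b) (hxy : x ≠ y) :
    ∃ τ : Equiv.Perm (Fin N), τ a = x ∧ τ b = y := by
  refine ⟨Equiv.swap (Equiv.swap a x b) y * Equiv.swap a x, ?_, ?_⟩
  · have hz : Equiv.swap a x b ≠ x := by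
      intro h
      have := (Equiv.swap a x).injective (h.trans (Equiv.swap_apply_left a x).symm)
      exact hab this.symm
    simp only [Equiv.Perm.mul_apply, Equiv.swap_apply_left]
    exact Equiv.swap_apply_of_ne_of_ne (Ne.symm hz) hxy
  · simp only [Equiv.Perm.mul_apply]
    exact Equiv.swap_apply_left _ _

/-- Fibers of `σ ↦ (σ⁻¹ a, σ⁻¹ b)` over distinct pairs all have the same cardinality. -/
lemma fiber_card_eq {N : ℕ} (a b x y : Fin N) (hab : a ≠ b) (hxy : x ≠ y) :
    (Finset.univ.filter fun σ : Equiv.Perm (Fin N) => σ⁻¹ a = x ∧ σ⁻¹ b = y).card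
      = (Finset.univ.filter fun σ : Equiv.Perm (Fin N) => σ⁻¹ a = a ∧ σ⁻¹ b = b).card := by
  obtain ⟨τ, hτa, hτb⟩ := exists_perm_pair a b x y hab hxy
  apply Finset.card_bij' (fun σ _ => σ * τ) (fun σ _ => σ * τ⁻¹)
  · intro σ hσ
    simp only [Finset.mem_filter, Finset.mem_univ, true_and] at hσ ⊢
    rw [mul_inv_rev, Equiv.Perm.mul_apply, Equiv.Perm.mul_apply, hσ.1, hσ.2]
    exact ⟨by rw [← hτa, Equiv.Perm.inv_apply_self], by rw [← hτb, Equiv.Perm.inv_apply_self]⟩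
  · intro σ hσ
    simp only [Finset.mem_filter, Finset.mem_univ, true_and] at hσ ⊢
    rw [mul_inv_rev, inv_inv, Equiv.Perm.mul_apply, Equiv.Perm.mul_apply, hσ.1, hσ.2, hτa, hτb]
    exact ⟨rfl, rfl⟩
  · intro σ _; rw [mul_assoc, mul_inv_cancel, mul_one]
  · intro σ _; rw [mul_assoc, inv_mul_cancel, mul_one]

/-- The probability that no candidate (relative rank ≤ 2) appears at times
`i+1, …, N` equals `i(i−1)/(N(N−1))`. -/
theorem prob_no_candidate_after (N i : ℕ) (hi : 2 ≤ i) (hiN : i ≤ N) :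
    uniformPerm N {σ : Equiv.Perm (Fin N) | ∀ s : ℕ, i < s → s ≤ N → 2 < relRank N σ s}
      = ((i * (i - 1) : ℕ) : ℝ≥0∞) / ((N * (N - 1) : ℕ) : ℝ≥0∞) := by
  have hN2 : 2 ≤ N := le_trans hi hiN
  set a : Fin N := ⟨0, by omega⟩ with ha
  set b : Fin N := ⟨1, by omega⟩ with hb
  have hab : a ≠ b := by
    intro h
    have : (a : ℕ) = (b : ℕ) := by rw [h]
    simp [ha, hb] at this
  -- Step 1: characterize the event
  have hchar : ∀ σ : Equiv.Perm (Fin N),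
      (∀ s : ℕ, i < s → s ≤ N → 2 < relRank N σ s) ↔
      ((σ⁻¹ a : ℕ) < i ∧ (σ⁻¹ b : ℕ) < i) := by
    intro σ
    constructor
    · intro h
      constructor
      · by_contra hp
        push_neg at hp
        have hlt := (σ⁻¹ a).isLt
        have hs := h ((σ⁻¹ a : ℕ) + 1) (by omega) (by omega)
        rw [relRank, dif_pos (by omega : 1 ≤ (σ⁻¹ a : ℕ) + 1 ∧ (σ⁻¹ a : ℕ) + 1 ≤ N)] at hs
        have hk : (⟨(σ⁻¹ a : ℕ) + 1 - 1, by omega⟩ : Fin N) = σ⁻¹ a := by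
          apply Fin.ext; simp
        rw [hk] at hs
        have hsub : (Finset.univ.filter fun j : Fin N =>
            (j : ℕ) + 1 ≤ (σ⁻¹ a : ℕ) + 1 ∧ σ j ≤ σ (σ⁻¹ a)) ⊆ {σ⁻¹ a} := by
          intro j hj
          simp only [Finset.mem_filter, Finset.mem_univ, true_and,
            Equiv.Perm.apply_inv_self] at hj
          have h0 : (σ j : ℕ) = 0 := by
            have := hj.2
            rw [Fin.le_def] at this
            simp only [ha] at this
            omega
          have hja : σ j = a := by apply Fin.ext; simpa [ha] using h0
          have hj' : j = σ⁻¹ a := by apply_fun σ⁻¹ at hja; simpa using hja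
          simp [hj']
        have := Finset.card_le_card hsub
        simp only [Finset.card_singleton] at this
        omega
      · by_contra hp
        push_neg at hp
        have hlt := (σ⁻¹ b).isLt
        have hs := h ((σ⁻¹ b : ℕ) + 1) (by omega) (by omega)
        rw [relRank, dif_pos (by omega : 1 ≤ (σ⁻¹ b : ℕ) + 1 ∧ (σ⁻¹ b : ℕ) + 1 ≤ N)] at hs
        have hk : (⟨(σ⁻¹ b : ℕ) + 1 - 1, by omega⟩ : Fin N) = σ⁻¹ b := by
          apply Fin.ext; simp
        rw [hk] at hs
        have hsub : (Finset.univ.filter fun j : Fin N =>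
            (j : ℕ) + 1 ≤ (σ⁻¹ b : ℕ) + 1 ∧ σ j ≤ σ (σ⁻¹ b)) ⊆ {σ⁻¹ a, σ⁻¹ b} := by
          intro j hj
          simp only [Finset.mem_filter, Finset.mem_univ, true_and,
            Equiv.Perm.apply_inv_self] at hj
          have h1 : (σ j : ℕ) ≤ 1 := by
            have := hj.2
            rw [Fin.le_def] at this
            simp only [hb] at this
            omega
          simp only [Finset.mem_insert, Finset.mem_singleton]
          rcases Nat.le_one_iff_eq_zero_or_eq_one.mp h1 with h0 | h1'
          · left
            have hja : σ j = a := by apply Fin.ext; simpa [ha] using h0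
            apply_fun σ⁻¹ at hja; simpa using hja
          · right
            have hjb : σ j = b := by apply Fin.ext; simpa [hb] using h1'
            apply_fun σ⁻¹ at hjb; simpa using hjb
        have hc1 := Finset.card_le_card hsub
        have hc2 : ({σ⁻¹ a, σ⁻¹ b} : Finset (Fin N)).card ≤ 2 :=
          le_trans (Finset.card_insert_le _ _) (by simp)
        omega
    · rintro ⟨h0, h1⟩ s hs hsN
      rw [relRank, dif_pos ⟨by omega, hsN⟩]
      set k : Fin N := ⟨s - 1, by omega⟩ with hk
      rw [Finset.two_lt_card]
      have hka : k ≠ σ⁻¹ a := by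
        intro h
        have : (k : ℕ) = (σ⁻¹ a : ℕ) := by rw [h]
        simp only [hk] at this; omega
      have hkb : k ≠ σ⁻¹ b := by
        intro h
        have : (k : ℕ) = (σ⁻¹ b : ℕ) := by rw [h]
        simp only [hk] at this; omega
      have hσk1 : 1 ≤ (σ k : ℕ) := by
        by_contra hc
        push_neg at hc
        have hka' : σ k = a := by apply Fin.ext; simp only [ha]; omega
        apply hka
        apply_fun σ⁻¹ at hka'; simpa using hka'
      refine ⟨σ⁻¹ a, ?_, σ⁻¹ b, ?_, k, ?_, ?_, ?_, ?_⟩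
      · simp only [Finset.mem_filter, Finset.mem_univ, true_and]
        refine ⟨by omega, ?_⟩
        rw [Equiv.Perm.apply_inv_self, Fin.le_def]
        simp only [ha]
        omega
      · simp only [Finset.mem_filter, Finset.mem_univ, true_and]
        refine ⟨by omega, ?_⟩
        rw [Equiv.Perm.apply_inv_self, Fin.le_def]
        simp only [hb]
        omega
      · simp only [Finset.mem_filter, Finset.mem_univ, true_and]
        refine ⟨?_, le_refl _⟩
        have hkv : (k : ℕ) = s - 1 := rfl
        omega
      · intro h; exact hab (by apply_fun σ at h; simpa using h)
      · exact fun h => hka h.symm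
      · exact fun h => hkb h.symm
  -- Step 2: the event as a finset
  set Sfin : Finset (Equiv.Perm (Fin N)) :=
    Finset.univ.filter (fun σ => (σ⁻¹ a : ℕ) < i ∧ (σ⁻¹ b : ℕ) < i) with hSfin
  have hset : {σ : Equiv.Perm (Fin N) | ∀ s : ℕ, i < s → s ≤ N → 2 < relRank N σ s}
      = ↑Sfin := by
    ext σ
    simp only [Set.mem_setOf_eq, hSfin, Finset.coe_filter, Finset.mem_univ, true_and,
      Set.mem_setOf_eq]
    exact hchar σ
  -- Step 3: counting
  set Afin : Finset (Fin N) := Finset.univ.filter (fun j => (j : ℕ) < i) with hAfin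
  have hAcard : Afin.card = i := by
    have : Afin = Finset.map ⟨Fin.castLE hiN, Fin.castLE_injective hiN⟩ Finset.univ := by
      ext j
      simp only [hAfin, Finset.mem_filter, Finset.mem_univ, true_and, Finset.mem_map,
        Function.Embedding.coeFn_mk]
      constructor
      · intro hj
        exact ⟨⟨(j : ℕ), hj⟩, by apply Fin.ext; simp⟩
      · rintro ⟨x, -, rfl⟩; simp
    rw [this, Finset.card_map, Finset.card_univ, Fintype.card_fin]
  set c : ℕ := (Finset.univ.filter fun σ : Equiv.Perm (Fin N) => σ⁻¹ a = a ∧ σ⁻¹ b = b).card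
    with hc
  have hcpos : c ≠ 0 := by
    rw [hc]
    exact (Finset.card_pos.mpr ⟨1, by simp <;> exact ⟨rfl, rfl⟩⟩).ne'
  have hfiber : ∀ t : Finset (Fin N × Fin N), (∀ p ∈ t, p.1 ≠ p.2) →
      ∀ s : Finset (Equiv.Perm (Fin N)),
      (∀ σ ∈ s, (σ⁻¹ a, σ⁻¹ b) ∈ t) →
      (∀ σ : Equiv.Perm (Fin N), (σ⁻¹ a, σ⁻¹ b) ∈ t → σ ∈ s) →
      s.card = t.card * c := by
    intro t ht s hs1 hs2
    rw [Finset.card_eq_sum_card_fiberwise hs1]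
    rw [Finset.sum_congr rfl (fun p hp => ?_), Finset.sum_const, smul_eq_mul]
    have heq : s.filter (fun σ => (σ⁻¹ a, σ⁻¹ b) = p)
        = Finset.univ.filter (fun σ : Equiv.Perm (Fin N) => σ⁻¹ a = p.1 ∧ σ⁻¹ b = p.2) := by
      ext σ
      simp only [Finset.mem_filter, Finset.mem_univ, true_and, Prod.ext_iff]
      constructor
      · exact fun h => h.2
      · intro h
        refine ⟨hs2 σ ?_, h⟩
        rw [h.1, h.2]
        simpa using hp
    rw [heq]
    exact fiber_card_eq a b p.1 p.2 hab (ht p hp)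
  have hScard : Sfin.card = Afin.offDiag.card * c := by
    apply hfiber
    · intro p hp; exact (Finset.mem_offDiag.mp hp).2.2
    · intro σ hσ
      simp only [hSfin, Finset.mem_filter, Finset.mem_univ, true_and] at hσ
      rw [Finset.mem_offDiag]
      refine ⟨by simpa [hAfin, Finset.mem_filter] using hσ.1, by simpa [hAfin, Finset.mem_filter] using hσ.2, ?_⟩
      intro h; exact hab (by apply_fun σ at h; simpa using h)
    · intro σ hσ
      rw [Finset.mem_offDiag] at hσ
      simp only [hSfin, Finset.mem_filter, Finset.mem_univ, true_and]
      simp only [hAfin, Finset.mem_filter, Finset.mem_univ, true_and] at hσ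
      exact ⟨hσ.1, hσ.2.1⟩
  have hUcard : (Finset.univ : Finset (Equiv.Perm (Fin N))).card
      = (Finset.univ : Finset (Fin N)).offDiag.card * c := by
    apply hfiber
    · intro p hp; exact (Finset.mem_offDiag.mp hp).2.2
    · intro σ _
      rw [Finset.mem_offDiag]
      refine ⟨Finset.mem_univ _, Finset.mem_univ _, ?_⟩
      intro h; exact hab (by apply_fun σ at h; simpa using h)
    · intro σ _; exact Finset.mem_univ _
  -- Step 4: compute the measure
  rw [uniformPerm, hset, PMF.toMeasure_apply_finset]
  simp only [PMF.uniformOfFintype_apply]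
  rw [Finset.sum_const, nsmul_eq_mul]
  rw [hScard, ← Finset.card_univ, hUcard]
  rw [Finset.offDiag_card, Finset.offDiag_card, hAcard, Finset.card_univ, Fintype.card_fin]
  have h1 : i * i - i = i * (i - 1) := by
    cases i with
    | zero => simp
    | succ n => rw [Nat.succ_sub_one]; rw [Nat.mul_succ]; omega
  have h2 : N * N - N = N * (N - 1) := by
    cases N with
    | zero => simp
    | succ n => rw [Nat.succ_sub_one]; rw [Nat.mul_succ]; omega
  rw [h1, h2]
  rw [← div_eq_mul_inv]
  push_cast
  rw [ENNReal.mul_div_mul_right _ _ (by exact_mod_cast hcpos) (ENNReal.natCast_ne_top c)]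
end
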